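/- For any finite tournament T, the fractional transversal number of the hypergraph H(T) of closed in-neighborhoods is strictly less than 2. Equivalently, if x is a nonnegative vector indexed by the vertices of T such that for every vertex v the sum of x over the closed in-neighborhood of v is at most 1, then the total sum of x is less than 2. -/
import Mathlib


/-- The fractional transversal number of the closed in-neighborhood hypergraph of
any finite tournament is strictly less than 2. -/
theorem stmt4 {V : Type*} [Fintype V] [DecidableEq V]
    (T : V → V → Prop) [DecidableRel T]
    (hirr : ∀ v, ¬ T v v)
    (htot : ∀ x y, x ≠ y → T x y ∨ T y x)
    (hasym : ∀ x y, T x y → ¬ T y x)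
    (x : V → ℝ) (hx : ∀ v, 0 ≤ x v)
    (hle : ∀ v : V, ∑ u ∈ Finset.univ.filter (fun u => u = v ∨ T u v), x u ≤ 1) :
    ∑ v, x v < 2 := by
  classical
  set S := ∑ v, x v with hS
  set Q := ∑ v, x v * x v with hQ
  set A := ∑ v, x v * ∑ u ∈ Finset.univ.filter (fun u => T u v), x u with hA
  have hcon : ∀ v, x v + ∑ u ∈ Finset.univ.filter (fun u => T u v), x u ≤ 1 := by
    intro v
    have h := hle v
    have heq : Finset.univ.filter (fun u => u = v ∨ T u v)
        = insert v (Finset.univ.filter (fun u => T u v)) := by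
      ext u; simp [Finset.mem_insert]
    rw [heq, Finset.sum_insert (by simp [hirr v])] at h
    exact h
  have hQA : Q + A ≤ S := by
    have : Q + A = ∑ v, x v * (x v + ∑ u ∈ Finset.univ.filter (fun u => T u v), x u) := by
      rw [hQ, hA]
      rw [← Finset.sum_add_distrib]
      refine Finset.sum_congr rfl fun v _ => ?_
      ring
    rw [this]
    calc ∑ v, x v * (x v + ∑ u ∈ Finset.univ.filter (fun u => T u v), x u)
        ≤ ∑ v, x v * 1 :=
          Finset.sum_le_sum fun v _ => mul_le_mul_of_nonneg_left (hcon v) (hx v)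
      _ = S := by simp [hS]
  -- pair sums
  have hApair : A = ∑ p ∈ (Finset.univ ×ˢ Finset.univ).filter
      (fun p : V × V => T p.2 p.1), x p.1 * x p.2 := by
    rw [Finset.sum_filter, Finset.sum_product, hA]
    refine Finset.sum_congr rfl fun v _ => ?_
    rw [Finset.mul_sum, Finset.sum_filter]
  have hswap : ∑ p ∈ (Finset.univ ×ˢ Finset.univ).filter
      (fun p : V × V => T p.1 p.2), x p.1 * x p.2
      = ∑ p ∈ (Finset.univ ×ˢ Finset.univ).filter
      (fun p : V × V => T p.2 p.1), x p.1 * x p.2 := by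
    apply Finset.sum_nbij' (fun p => (p.2, p.1)) (fun p => (p.2, p.1)) <;>
      simp [mul_comm]
  have hdiag : ∑ p ∈ (Finset.univ ×ˢ Finset.univ).filter
      (fun p : V × V => p.1 = p.2), x p.1 * x p.2 = Q := by
    rw [hQ]
    apply Finset.sum_nbij' (fun p : V × V => p.1) (fun v => (v, v)) <;> simp
  have hsq : S * S = Q + 2 * A := by
    have h1 : S * S = ∑ p ∈ Finset.univ ×ˢ Finset.univ, x p.1 * x p.2 := by
      rw [hS, Finset.sum_mul_sum, ← Finset.sum_product']
    rw [h1, ← Finset.sum_filter_add_sum_filter_not (Finset.univ ×ˢ Finset.univ)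
      (fun p : V × V => p.1 = p.2), hdiag]
    have h2 : (Finset.univ ×ˢ Finset.univ).filter (fun p : V × V => ¬ p.1 = p.2)
        = (Finset.univ ×ˢ Finset.univ).filter (fun p : V × V => T p.1 p.2)
          ∪ (Finset.univ ×ˢ Finset.univ).filter (fun p : V × V => T p.2 p.1) := by
      ext ⟨a, b⟩
      simp only [Finset.mem_filter, Finset.mem_union, Finset.mem_product, Finset.mem_univ,
        true_and]
      constructor
      · exact fun h => htot a b h
      · rintro (h | h) hab
        · subst hab; exact hirr a h
        · subst hab; exact hirr a h
    have hdisj : Disjoint ((Finset.univ ×ˢ Finset.univ).filter (fun p : V × V => T p.1 p.2))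
        ((Finset.univ ×ˢ Finset.univ).filter (fun p : V × V => T p.2 p.1)) := by
      rw [Finset.disjoint_filter]
      exact fun p _ h => hasym _ _ h
    rw [h2, Finset.sum_union hdisj, hswap, ← hApair]
    ring
  -- conclude
  have hQ0 : 0 ≤ Q := Finset.sum_nonneg fun v _ => mul_self_nonneg _
  by_contra hcontra
  push_neg at hcontra
  have hQzero : Q = 0 := by nlinarith
  have hxz : ∀ v, x v = 0 := by
    intro v
    have := (Finset.sum_eq_zero_iff_of_nonneg
      (fun v _ => mul_self_nonneg (x v))).mp hQzero v (Finset.mem_univ v)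
    nlinarith [this]
  have : S = 0 := by rw [hS]; exact Finset.sum_eq_zero fun v _ => hxz v
  linarith
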